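/- Exponential lower bound preservation: if K is bounded by C_K, f₀ ∈ ℓ¹(ℤ) nonnegative, and f is the corresponding nonnegative mass-preserving solution of ∂_t f = Q(f), then for every t₀ ≥ 0, t ≥ t₀ and k ∈ ℤ one has f(t,k) ≥ e^{−2 C_K m(f₀)(t−t₀)} f(t₀,k). In particular, if f(t,k) > 0 for some t, then f(s,k) > 0 for all s ≥ t. -/

import Mathlib

open scoped BigOperators

/-- The charge-exchange collision operator. -/
noncomputable def Qop (K : ℤ → ℤ → ℝ) (f g : ℤ → ℝ) (k : ℤ) : ℝ :=
  ∑' l : ℤ, (K l (k - 1) * g l * f (k - 1) - K k (l - 1) * f k * g (l - 1)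
      - K l k * g l * f k + K (k + 1) (l - 1) * f (k + 1) * g (l - 1))

lemma Qop_lower (K : ℤ → ℤ → ℝ) (CK : ℝ) (hK0 : ∀ k l, 0 ≤ K k l) (hKb : ∀ k l, K k l ≤ CK)
    (g : ℤ → ℝ) (hg0 : ∀ k, 0 ≤ g k) (hgs : Summable g) (k : ℤ) :
    -(2 * CK * (∑' j, g j)) * g k ≤ Qop K g g k := by
  have hCK0 : 0 ≤ CK := le_trans (hK0 0 0) (hKb 0 0)
  set S := ∑' j, g j with hS
  have hS0 : 0 ≤ S := tsum_nonneg hg0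
  have hshift : Summable (fun l : ℤ => g (l - 1)) :=
    ((Equiv.subRight (1 : ℤ)).summable_iff (f := g)).mpr hgs
  have hshiftsum : (∑' l : ℤ, g (l - 1)) = S := (Equiv.subRight (1 : ℤ)).tsum_eq g
  have nn : ∀ a b c d : ℤ, (0:ℝ) ≤ K a b * g c * g d := fun a b c d =>
    mul_nonneg (mul_nonneg (hK0 _ _) (hg0 _)) (hg0 _)
  have bd : ∀ a b c d : ℤ, K a b * g c * g d ≤ CK * g c * g d := fun a b c d =>
    mul_le_mul_of_nonneg_right (mul_le_mul_of_nonneg_right (hKb _ _) (hg0 _)) (hg0 _)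
  have hA : Summable (fun l => K l (k - 1) * g l * g (k - 1)) :=
    Summable.of_nonneg_of_le (fun l => nn _ _ _ _) (fun l => bd _ _ _ _)
      ((hgs.mul_left CK).mul_right (g (k - 1)))
  have hBmaj : Summable (fun l : ℤ => CK * g k * g (l - 1)) := hshift.mul_left _
  have hB : Summable (fun l => K k (l - 1) * g k * g (l - 1)) :=
    Summable.of_nonneg_of_le (fun l => nn _ _ _ _) (fun l => bd _ _ _ _) hBmaj
  have hC : Summable (fun l => K l k * g l * g k) :=
    Summable.of_nonneg_of_le (fun l => nn _ _ _ _) (fun l => bd _ _ _ _)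
      ((hgs.mul_left CK).mul_right (g k))
  have hD : Summable (fun l => K (k + 1) (l - 1) * g (k + 1) * g (l - 1)) :=
    Summable.of_nonneg_of_le (fun l => nn _ _ _ _) (fun l => bd _ _ _ _) (hshift.mul_left _)
  have hsplit : Qop K g g k = (∑' l, K l (k - 1) * g l * g (k - 1))
      - (∑' l, K k (l - 1) * g k * g (l - 1)) - (∑' l, K l k * g l * g k)
      + (∑' l, K (k + 1) (l - 1) * g (k + 1) * g (l - 1)) := by
    unfold Qop
    rw [Summable.tsum_add (((hA.sub hB).sub hC)) hD, Summable.tsum_sub (hA.sub hB) hC, Summable.tsum_sub hA hB]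
  rw [hsplit]
  have hApos : 0 ≤ ∑' l, K l (k - 1) * g l * g (k - 1) := tsum_nonneg (fun l => nn _ _ _ _)
  have hDpos : 0 ≤ ∑' l, K (k + 1) (l - 1) * g (k + 1) * g (l - 1) :=
    tsum_nonneg (fun l => nn _ _ _ _)
  have hBle : (∑' l, K k (l - 1) * g k * g (l - 1)) ≤ CK * g k * S := by
    calc (∑' l, K k (l - 1) * g k * g (l - 1))
        ≤ ∑' l, CK * g k * g (l - 1) := Summable.tsum_le_tsum (fun l => bd _ _ _ _) hB hBmaj
      _ = CK * g k * S := by rw [tsum_mul_left, hshiftsum]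
  have hCle : (∑' l, K l k * g l * g k) ≤ CK * S * g k := by
    calc (∑' l, K l k * g l * g k)
        ≤ ∑' l, CK * g l * g k :=
          Summable.tsum_le_tsum (fun l => bd _ _ _ _) hC ((hgs.mul_left CK).mul_right (g k))
      _ = CK * S * g k := by
          rw [show (fun l : ℤ => CK * g l * g k) = fun l : ℤ => CK * (g l * g k) by
              funext l; ring, tsum_mul_left, tsum_mul_right, mul_assoc]
  nlinarith [hApos, hDpos, hBle, hCle]

theorem exponential_lower_bound_preservation (K : ℤ → ℤ → ℝ) (CK : ℝ) (hCK : 0 < CK)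
    (hK0 : ∀ k l, 0 ≤ K k l) (hKb : ∀ k l, K k l ≤ CK)
    (f₀ : ℤ → ℝ) (hf₀pos : ∀ k, 0 ≤ f₀ k) (hf₀mem : Summable fun k => |f₀ k|)
    (f : ℝ → ℤ → ℝ)
    (hinit : f 0 = f₀)
    (hpos : ∀ t ∈ Set.Ici (0 : ℝ), ∀ k, 0 ≤ f t k)
    (hmem : ∀ t ∈ Set.Ici (0 : ℝ), Summable fun k : ℤ => |f t k|)
    (hode : ∀ t ∈ Set.Ici (0 : ℝ), ∀ k : ℤ,
      HasDerivWithinAt (fun s => f s k) (Qop K (f t) (f t) k) (Set.Ici (0 : ℝ)) t)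
    (hmass : ∀ t ∈ Set.Ici (0 : ℝ), ∑' k : ℤ, f t k = ∑' k : ℤ, f₀ k) :
    (∀ t₀ t : ℝ, 0 ≤ t₀ → t₀ ≤ t → ∀ k : ℤ,
        Real.exp (-2 * CK * (∑' k : ℤ, f₀ k) * (t - t₀)) * f t₀ k ≤ f t k) ∧
      (∀ t : ℝ, 0 ≤ t → ∀ k : ℤ, 0 < f t k → ∀ s : ℝ, t ≤ s → 0 < f s k) := by
  set m := ∑' k : ℤ, f₀ k with hm
  have hm0 : 0 ≤ m := tsum_nonneg hf₀pos
  set c := 2 * CK * m with hc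
  have hc0 : 0 ≤ c := by positivity
  -- the basic lower bound on Q along the solution
  have hQ : ∀ t ∈ Set.Ici (0 : ℝ), ∀ k : ℤ, -c * f t k ≤ Qop K (f t) (f t) k := by
    intro t ht k
    have hsum : Summable (f t) := by
      have := hmem t ht
      refine this.congr fun k => ?_
      exact abs_of_nonneg (hpos t ht k)
    have h0 := Qop_lower K CK hK0 hKb (f t) (hpos t ht) hsum k
    rw [hmass t ht] at h0
    exact h0
  -- monotonicity of g k (s) = exp (c s) * f s k on Ici 0
  have hmono : ∀ k : ℤ, MonotoneOn (fun s => Real.exp (c * s) * f s k) (Set.Ici (0:ℝ)) := by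
    intro k
    set g : ℝ → ℝ := fun s => Real.exp (c * s) * f s k with hg
    have hderiv : ∀ t ∈ Set.Ici (0:ℝ), HasDerivWithinAt g
        (Real.exp (c * t) * c * f t k + Real.exp (c * t) * Qop K (f t) (f t) k)
        (Set.Ici (0:ℝ)) t := by
      intro t ht
      have hinner : HasDerivAt (fun s : ℝ => c * s) c t := by
        simpa using (hasDerivAt_id t).const_mul c
      have h1 : HasDerivAt (fun s : ℝ => Real.exp (c * s)) (Real.exp (c * t) * c) t :=
        (Real.hasDerivAt_exp (c * t)).comp t hinner
      exact h1.hasDerivWithinAt.mul (hode t ht k)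
    have hdnn : ∀ t ∈ Set.Ici (0:ℝ),
        0 ≤ Real.exp (c * t) * c * f t k + Real.exp (c * t) * Qop K (f t) (f t) k := by
      intro t ht
      have h := hQ t ht k
      have he : 0 < Real.exp (c * t) := Real.exp_pos _
      nlinarith [he, h]
    have hcont : ContinuousOn g (Set.Ici 0) :=
      fun t ht => (hderiv t ht).continuousWithinAt
    have hdiff : ∀ t ∈ interior (Set.Ici (0:ℝ)), HasDerivAt g
        (Real.exp (c * t) * c * f t k + Real.exp (c * t) * Qop K (f t) (f t) k) t := by
      intro t ht
      rw [interior_Ici] at ht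
      exact (hderiv t (Set.mem_Ici.mpr (le_of_lt (Set.mem_Ioi.mp ht)))).hasDerivAt (Ici_mem_nhds (Set.mem_Ioi.mp ht))
    apply monotoneOn_of_deriv_nonneg (convex_Ici 0) hcont
    · intro t ht
      exact (hdiff t ht).differentiableAt.differentiableWithinAt
    · intro t ht
      rw [(hdiff t ht).deriv]
      exact hdnn t (by rw [interior_Ici] at ht; exact Set.mem_Ici.mpr (le_of_lt (Set.mem_Ioi.mp ht)))
  have main : ∀ t₀ t : ℝ, 0 ≤ t₀ → t₀ ≤ t → ∀ k : ℤ,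
      Real.exp (-2 * CK * m * (t - t₀)) * f t₀ k ≤ f t k := by
    intro t₀ t ht₀ htt k
    have h := hmono k ht₀ (le_trans ht₀ htt) htt
    -- h : exp (c t₀) * f t₀ k ≤ exp (c t) * f t k
    have he : 0 < Real.exp (c * t) := Real.exp_pos _
    rw [show (-2 * CK * m * (t - t₀)) = c * t₀ - c * t by rw [hc]; ring, Real.exp_sub,
      div_mul_eq_mul_div, div_le_iff₀ he]
    rw [mul_comm (f t k)]
    exact h
  refine ⟨main, ?_⟩
  intro t ht k hfk s hts
  have := main t s ht hts k
  have he : 0 < Real.exp (-2 * CK * m * (s - t)) := Real.exp_pos _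
  nlinarith
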